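/- Every GGS-group over the p-adic tree (p prime, with nonzero defining vector e ∈ (ℤ/pℤ)^{p-1}) is strongly fractal (and in particular fractal). -/

import Mathlib

open Equiv

namespace TreeFract

variable {X : Type*}

/-- The automorphism group of the rooted `d`-adic tree with vertex set the free
monoid `List X`: permutations of the vertex set fixing the root and sending
children of a vertex to children of its image (this is exactly incidence
preservation for the rooted tree). -/
def AutT (X : Type*) : Subgroup (Equiv.Perm (List X)) where
  carrier := {g | g [] = [] ∧ ∀ (u : List X) (x : X), ∃ y : X, g (u ++ [x]) = g u ++ [y]}
  one_mem' := ⟨rfl, fun _ x => ⟨x, rfl⟩⟩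
  mul_mem' := by
    rintro f g ⟨hf1, hf2⟩ ⟨hg1, hg2⟩
    refine ⟨?_, fun u x => ?_⟩
    · show f (g []) = []
      rw [hg1, hf1]
    · obtain ⟨y, hy⟩ := hg2 u x
      obtain ⟨z, hz⟩ := hf2 (g u) y
      exact ⟨z, by show f (g (u ++ [x])) = f (g u) ++ [z]; rw [hy, hz]⟩
  inv_mem' := by
    rintro g ⟨hg1, hg2⟩
    have hinj := g.injective
    refine ⟨?_, fun u x => ?_⟩
    · apply hinj
      show g (g⁻¹ []) = g []
      rw [(show ∀ (σ : Equiv.Perm (List X)) y, σ (σ⁻¹ y) = y from fun σ y => σ.apply_symm_apply y), hg1]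
    · have hne : g⁻¹ (u ++ [x]) ≠ [] := by
        intro h
        have h2 : u ++ [x] = g [] := by
          conv_lhs => rw [← (show ∀ (σ : Equiv.Perm (List X)) y, σ (σ⁻¹ y) = y from fun σ y => σ.apply_symm_apply y) g (u ++ [x]), h]
        rw [hg1] at h2
        simp at h2
      obtain ⟨y, hy⟩ : ∃ y, g⁻¹ (u ++ [x]) = (g⁻¹ (u ++ [x])).dropLast ++ [y] :=
        ⟨(g⁻¹ (u ++ [x])).getLast hne, (List.dropLast_append_getLast hne).symm⟩
      obtain ⟨z, hz⟩ := hg2 ((g⁻¹ (u ++ [x])).dropLast) y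
      have happ : g ((g⁻¹ (u ++ [x])).dropLast) ++ [z] = u ++ [x] := by
        rw [← hz, ← hy, (show ∀ (σ : Equiv.Perm (List X)) y, σ (σ⁻¹ y) = y from fun σ y => σ.apply_symm_apply y)]
      have h2 : g ((g⁻¹ (u ++ [x])).dropLast) = u ∧ ([z] : List X) = [x] :=
        List.append_inj' happ rfl
      refine ⟨y, ?_⟩
      rw [hy]
      congr 1
      apply hinj
      rw [(show ∀ (σ : Equiv.Perm (List X)) y, σ (σ⁻¹ y) = y from fun σ y => σ.apply_symm_apply y), h2.1]

/-- The underlying function of the section of `g` at the vertex `u`. -/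
def sectFun (g : Equiv.Perm (List X)) (u : List X) : List X → List X :=
  fun v => (g (u ++ v)).drop (g u).length

open scoped Classical in
/-- The section `g_u` of a tree automorphism `g` at a vertex `u`, i.e. the unique
automorphism with `g (u ++ v) = g u ++ g_u v` for all `v`.  (By convention it is
the identity for permutations which are not tree automorphisms.) -/
noncomputable def sect (g : Equiv.Perm (List X)) (u : List X) : Equiv.Perm (List X) :=
  if h : Function.Bijective (sectFun g u) then Equiv.ofBijective _ h else 1

/-- The underlying function of the label of `g` at the vertex `u`. -/
def labelFun (g : Equiv.Perm (List X)) (u : List X) : X → X :=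
  fun x => (g (u ++ [x])).getLastD x

open scoped Classical in
/-- The label `g_(u)` of a tree automorphism `g` at a vertex `u`: the permutation
of `X` with `g (u ++ [x]) = g u ++ [g_(u) x]`.  (By convention it is the identity
for permutations which are not tree automorphisms.) -/
noncomputable def label (g : Equiv.Perm (List X)) (u : List X) : Equiv.Perm X :=
  if h : Function.Bijective (labelFun g u) then Equiv.ofBijective _ h else 1

/-- The stabilizer `st_G(u)` of the vertex `u` in `G`. -/
def stV (G : Subgroup (Equiv.Perm (List X))) (u : List X) : Subgroup (Equiv.Perm (List X)) where
  carrier := {g | g ∈ G ∧ g u = u}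
  one_mem' := ⟨one_mem G, rfl⟩
  mul_mem' := by
    rintro f g ⟨hf, hf2⟩ ⟨hg, hg2⟩
    exact ⟨mul_mem hf hg, by show f (g u) = u; rw [hg2, hf2]⟩
  inv_mem' := by
    rintro g ⟨hg, hg2⟩
    refine ⟨inv_mem hg, ?_⟩
    apply g.injective
    show g (g⁻¹ u) = g u
    rw [(show ∀ (σ : Equiv.Perm (List X)) y, σ (σ⁻¹ y) = y from fun σ y => σ.apply_symm_apply y), hg2]

/-- The stabilizer `st_G(L_n)` of the `n`-th level in `G`. -/
def stL (G : Subgroup (Equiv.Perm (List X))) (n : ℕ) : Subgroup (Equiv.Perm (List X)) where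
  carrier := {g | g ∈ G ∧ ∀ u : List X, u.length = n → g u = u}
  one_mem' := ⟨one_mem G, fun _ _ => rfl⟩
  mul_mem' := by
    rintro f g ⟨hf, hf2⟩ ⟨hg, hg2⟩
    exact ⟨mul_mem hf hg, fun u hu => by show f (g u) = u; rw [hg2 u hu, hf2 u hu]⟩
  inv_mem' := by
    rintro g ⟨hg, hg2⟩
    refine ⟨inv_mem hg, fun u hu => ?_⟩
    apply g.injective
    show g (g⁻¹ u) = g u
    rw [(show ∀ (σ : Equiv.Perm (List X)) y, σ (σ⁻¹ y) = y from fun σ y => σ.apply_symm_apply y), hg2 u hu]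

/-- `G` is self-similar: sections of elements of `G` lie in `G`. -/
def SelfSimilar (G : Subgroup (Equiv.Perm (List X))) : Prop :=
  ∀ g ∈ G, ∀ u : List X, sect g u ∈ G

/-- `G` acts transitively on the first level of the tree. -/
def FirstLevelTransitive (G : Subgroup (Equiv.Perm (List X))) : Prop :=
  ∀ x y : X, ∃ g ∈ G, g [x] = [y]

/-- `G` is level transitive: it acts transitively on every level of the tree. -/
def LevelTransitive (G : Subgroup (Equiv.Perm (List X))) : Prop :=
  ∀ (n : ℕ) (u v : List X), u.length = n → v.length = n → ∃ g ∈ G, g u = v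

/-- `G` is fractal: `ψ_u(st_G(u)) = G` for every vertex `u`. -/
def Fractal (G : Subgroup (Equiv.Perm (List X))) : Prop :=
  ∀ u : List X,
    (fun g => sect g u) '' (stV G u : Set (Equiv.Perm (List X))) = (G : Set (Equiv.Perm (List X)))

/-- `G` is strongly fractal: `ψ_x(st_G(L_1)) = G` for every first-level vertex `x`. -/
def StronglyFractal (G : Subgroup (Equiv.Perm (List X))) : Prop :=
  ∀ x : X,
    (fun g => sect g [x]) '' (stL G 1 : Set (Equiv.Perm (List X))) = (G : Set (Equiv.Perm (List X)))

/-- `G` is super strongly fractal: `ψ_u(st_G(L_n)) = G` for every `n` and every `u ∈ L_n`. -/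
def SuperStronglyFractal (G : Subgroup (Equiv.Perm (List X))) : Prop :=
  ∀ (n : ℕ) (u : List X), u.length = n →
    (fun g => sect g u) '' (stL G n : Set (Equiv.Perm (List X))) = (G : Set (Equiv.Perm (List X)))

/-- The normal closure `⟨S⟩^G` of a subset `S ⊆ G` in the subgroup `G`, realized as a
subgroup of the ambient group: the subgroup generated by all `G`-conjugates of `S`. -/
def normalClosureIn (G : Subgroup (Equiv.Perm (List X))) (S : Set (Equiv.Perm (List X))) :
    Subgroup (Equiv.Perm (List X)) :=
  Subgroup.closure {t | ∃ g ∈ G, ∃ s ∈ S, t = g * s * g⁻¹}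

end TreeFract

namespace TreeFract

variable {X : Type*}

section SectLemmas

variable {g f : Equiv.Perm (List X)}

lemma exists_append (hg : g ∈ AutT X) (u v : List X) : ∃ w, g (u ++ v) = g u ++ w := by
  induction v using List.reverseRecOn with
  | nil => exact ⟨[], by simp⟩
  | append_singleton v x ih =>
    obtain ⟨w, hw⟩ := ih
    obtain ⟨y, hy⟩ := hg.2 (u ++ v) x
    exact ⟨w ++ [y], by rw [← List.append_assoc, hy, hw, List.append_assoc]⟩

lemma sectFun_spec (hg : g ∈ AutT X) (u v : List X) :
    g (u ++ v) = g u ++ sectFun g u v := by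
  obtain ⟨w, hw⟩ := exists_append hg u v
  unfold sectFun
  rw [hw, List.drop_left]

lemma sectFun_bijective (hg : g ∈ AutT X) (u : List X) :
    Function.Bijective (sectFun g u) := by
  constructor
  · intro v v' h
    have h1 := sectFun_spec hg u v
    have h2 := sectFun_spec hg u v'
    rw [h] at h1
    have : g (u ++ v) = g (u ++ v') := by rw [h1, h2]
    have := g.injective this
    exact List.append_cancel_left this
  · intro w
    have hinv : g⁻¹ ∈ AutT X := inv_mem hg
    refine ⟨sectFun g⁻¹ (g u) w, ?_⟩
    have h1 := sectFun_spec hinv (g u) w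
    rw [(show ∀ (σ : Equiv.Perm (List X)) y, σ⁻¹ (σ y) = y from fun σ y => σ.symm_apply_apply y)] at h1
    have h2 : g (u ++ sectFun g⁻¹ (g u) w) = g u ++ w := by
      rw [← h1, (show ∀ (σ : Equiv.Perm (List X)) y, σ (σ⁻¹ y) = y from fun σ y => σ.apply_symm_apply y)]
    show (g (u ++ sectFun g⁻¹ (g u) w)).drop (g u).length = w
    rw [h2, List.drop_left]

lemma sect_apply (hg : g ∈ AutT X) (u v : List X) :
    sect g u v = sectFun g u v := by
  unfold sect
  rw [dif_pos (sectFun_bijective hg u)]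
  rfl

lemma sect_spec (hg : g ∈ AutT X) (u v : List X) :
    g (u ++ v) = g u ++ sect g u v := by
  rw [sect_apply hg]
  exact sectFun_spec hg u v

lemma sect_mem_autT (hg : g ∈ AutT X) (u : List X) : sect g u ∈ AutT X := by
  constructor
  · have h := sect_spec hg u []
    rw [List.append_nil] at h
    simpa using h.symm
  · intro v x
    obtain ⟨y, hy⟩ := hg.2 (u ++ v) x
    refine ⟨y, ?_⟩
    have h1 := sect_spec hg u (v ++ [x])
    rw [← List.append_assoc, hy, sect_spec hg u v, List.append_assoc] at h1
    exact (List.append_cancel_left h1).symm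

lemma sect_root (hg : g ∈ AutT X) : sect g [] = g := by
  refine Equiv.ext fun v => ?_
  rw [sect_apply hg]
  unfold sectFun
  rw [hg.1]
  simp

lemma sect_mul (hf : f ∈ AutT X) (hg : g ∈ AutT X) (u : List X) :
    sect (f * g) u = sect f (g u) * sect g u := by
  refine Equiv.ext fun v => ?_
  have h1 := sect_spec (mul_mem hf hg) u v
  have h2 : (f * g) (u ++ v) = (f * g) u ++ (sect f (g u) * sect g u) v := by
    simp only [Equiv.Perm.mul_apply]
    rw [sect_spec hg u v, sect_spec hf (g u) (sect g u v)]
  rw [h2] at h1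
  exact (List.append_cancel_left h1).symm

lemma sect_append (hg : g ∈ AutT X) (u v : List X) :
    sect g (u ++ v) = sect (sect g u) v := by
  refine Equiv.ext fun w => ?_
  have h1 := sect_spec hg (u ++ v) w
  have h2 : g (u ++ v ++ w) = g (u ++ v) ++ sect (sect g u) v w := by
    rw [List.append_assoc, sect_spec hg u (v ++ w),
      sect_spec (sect_mem_autT hg u) v w, sect_spec hg u v, List.append_assoc]
  rw [h2] at h1
  exact (List.append_cancel_left h1).symm

lemma sect_one (u : List X) : sect (1 : Equiv.Perm (List X)) u = 1 := by
  refine Equiv.ext fun v => ?_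
  rw [sect_apply (one_mem (AutT X)) u]
  unfold sectFun
  simp

lemma sect_inv (hg : g ∈ AutT X) (u : List X) :
    sect g⁻¹ u = (sect g (g⁻¹ u))⁻¹ := by
  have h := sect_mul hg (inv_mem hg) u
  rw [mul_inv_cancel, sect_one] at h
  exact (inv_eq_of_mul_eq_one_right h.symm).symm

end SectLemmas

end TreeFract

namespace TreeFract

/-! ### The Hanoi towers generators -/

section Hanoi

variable {d : ℕ}

/-- The underlying function of the automorphism `a_{ij}` of the Hanoi Towers group:
it swaps the first occurrence of `i` or `j` in a word. -/
def hanoiFun (i j : Fin d) : List (Fin d) → List (Fin d)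
  | [] => []
  | x :: w => if x = i then j :: w else if x = j then i :: w else x :: hanoiFun i j w

lemma hanoiFun_invol (i j : Fin d) : ∀ w, hanoiFun i j (hanoiFun i j w) = w
  | [] => rfl
  | x :: w => by
    by_cases h1 : x = i
    · subst h1
      by_cases h2 : j = x
      · simp [hanoiFun, h2]
      · simp [hanoiFun, h2]
    · by_cases h2 : x = j
      · subst h2
        simp [hanoiFun, h1]
      · simp [hanoiFun, h1, h2, hanoiFun_invol i j w]

/-- The automorphism `a_{ij}` of the `d`-adic tree: its label at the root is the
transposition `(x_i x_j)`, its sections at the first-level vertices `x_i` and `x_j`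
are trivial and all its other first-level sections equal `a_{ij}` again. -/
def hanoiA (i j : Fin d) : Equiv.Perm (List (Fin d)) :=
  ⟨hanoiFun i j, hanoiFun i j, hanoiFun_invol i j, hanoiFun_invol i j⟩

end Hanoi

/-- The generator `b_i = a_{i,i+1}` (here `i` runs through `0, …, d-2`,
corresponding to the paper's `b_1, …, b_{d-1}`). -/
def hanoiB (d : ℕ) (i : ℕ) (h : i + 1 < d) : Equiv.Perm (List (Fin d)) :=
  hanoiA ⟨i, Nat.lt_of_succ_lt h⟩ ⟨i + 1, h⟩

/-- The subgroup `G = ⟨b_1, …, b_{d-1}⟩` of the Hanoi Towers group. -/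
def hanoiGroup (d : ℕ) : Subgroup (Equiv.Perm (List (Fin d))) :=
  Subgroup.closure {g | ∃ (i : ℕ) (h : i + 1 < d), g = hanoiB d i h}

/-! ### GGS groups (and the rooted automorphism `a`) -/

section GGS

variable {p : ℕ}

/-- The function adding `m` to the first letter of a word over `ZMod p`. -/
def rotFun (m : ZMod p) : List (ZMod p) → List (ZMod p)
  | [] => []
  | x :: w => (x + m) :: w

/-- The rooted automorphism of the `p`-adic tree whose label at the root is the
`p`-cycle `x ↦ x + m`; for `m = 1` this is the generator `a` of a GGS-group
(identifying `x_i` with `i mod p`). -/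
def rotPerm (m : ZMod p) : Equiv.Perm (List (ZMod p)) :=
  ⟨rotFun m, rotFun (-m),
    by intro w; cases w <;> simp [rotFun],
    by intro w; cases w <;> simp [rotFun]⟩

/-- The underlying function of the GGS generator `b` with defining vector `e`
(the value `e 0` is irrelevant; `e i` for `i ≠ 0` are the coordinates
`e_1, …, e_{p-1}`): `b` fixes the first level, its section at `x_i` is
`a^{e_i}` for `i = 1, …, p-1` and its section at `x_p` (identified with `0`)
is `b` again. -/
def ggsFun (e : ZMod p → ZMod p) : List (ZMod p) → List (ZMod p)
  | [] => []
  | x :: w => if x = 0 then x :: ggsFun e w else x :: rotFun (e x) w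

lemma ggsFun_inv (e : ZMod p → ZMod p) : ∀ w, ggsFun (fun i => -(e i)) (ggsFun e w) = w
  | [] => rfl
  | x :: w => by
    by_cases h : x = 0
    · simp only [ggsFun, if_pos h]
      rw [ggsFun_inv e w]
    · simp only [ggsFun, if_neg h]
      cases w <;> simp [rotFun]

/-- The GGS generator `b` with defining vector `e`, as a tree automorphism. -/
def ggsB (e : ZMod p → ZMod p) : Equiv.Perm (List (ZMod p)) :=
  ⟨ggsFun e, ggsFun (fun i => -(e i)), ggsFun_inv e, by
    intro w
    have h := ggsFun_inv (fun i => -(e i)) w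
    simpa using h⟩

end GGS

/-- The GGS-group `G = ⟨a, b⟩` over the `p`-adic tree with defining vector `e`. -/
def ggsGroup (p : ℕ) (e : ZMod p → ZMod p) : Subgroup (Equiv.Perm (List (ZMod p))) :=
  Subgroup.closure {rotPerm 1, ggsB e}

/-! ### The first Grigorchuk group -/

/-- The three directed generators `b, c, d` (for `k % 3 = 0, 1, 2` respectively) of the
first Grigorchuk group, defined by the mutual recursion
`b = (a, c)`, `c = (a, d)`, `d = (1, b)` (identifying `x_1` with `0` and `x_2` with `1`). -/
def griFun : ℕ → List (ZMod 2) → List (ZMod 2)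
  | _, [] => []
  | k, x :: w => if x = 0 then (if k % 3 = 2 then x :: w else x :: rotFun 1 w)
                 else x :: griFun (k + 1) w

lemma griFun_invol : ∀ (w : List (ZMod 2)) (k : ℕ), griFun k (griFun k w) = w
  | [], _ => rfl
  | x :: w, k => by
    by_cases h : x = 0
    · by_cases h3 : k % 3 = 2
      · simp [griFun, h, h3]
      · simp only [griFun, if_pos h, if_neg h3]
        cases w with
        | nil => rfl
        | cons y v =>
            have hy : y + 1 + 1 = y := by
              rw [add_assoc]
              simp [show (1 : ZMod 2) + 1 = 0 from rfl]
            simp [rotFun, hy]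
    · simp only [griFun, if_neg h]
      rw [griFun_invol w (k + 1)]

/-- The generator `b` of the first Grigorchuk group, with sections `(a, c)`. -/
def griB : Equiv.Perm (List (ZMod 2)) :=
  ⟨griFun 0, griFun 0, fun w => griFun_invol w 0, fun w => griFun_invol w 0⟩

/-- The generator `c` of the first Grigorchuk group, with sections `(a, d)`. -/
def griC : Equiv.Perm (List (ZMod 2)) :=
  ⟨griFun 1, griFun 1, fun w => griFun_invol w 1, fun w => griFun_invol w 1⟩

/-- The generator `d` of the first Grigorchuk group, with sections `(1, b)`. -/
def griD : Equiv.Perm (List (ZMod 2)) :=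
  ⟨griFun 2, griFun 2, fun w => griFun_invol w 2, fun w => griFun_invol w 2⟩

/-- The first Grigorchuk group `𝒢 = ⟨a, b, c, d⟩` acting on the binary tree. -/
def grigorchukGroup : Subgroup (Equiv.Perm (List (ZMod 2))) :=
  Subgroup.closure {rotPerm 1, griB, griC, griD}

end TreeFract

namespace TreeFract

section GGSLemmas

variable {p : ℕ}

lemma rotPerm_mem_autT (m : ZMod p) : rotPerm m ∈ AutT (ZMod p) := by
  refine ⟨rfl, fun u x => ?_⟩
  cases u with
  | nil => exact ⟨x + m, rfl⟩
  | cons z u => exact ⟨x, rfl⟩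

lemma rotFun_append (m : ZMod p) (u : List (ZMod p)) (x : ZMod p) :
    ∃ y, rotFun m (u ++ [x]) = rotFun m u ++ [y] := by
  cases u with
  | nil => exact ⟨x + m, rfl⟩
  | cons z u => exact ⟨x, rfl⟩

lemma ggsFun_append (e : ZMod p → ZMod p) :
    ∀ (u : List (ZMod p)) (x : ZMod p), ∃ y, ggsFun e (u ++ [x]) = ggsFun e u ++ [y]
  | [], x => ⟨x, by by_cases h : x = 0 <;> simp [ggsFun, rotFun, h]⟩
  | z :: u, x => by
    by_cases hz : z = 0
    · obtain ⟨y, hy⟩ := ggsFun_append e u x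
      exact ⟨y, by simp only [List.cons_append, ggsFun, if_pos hz]; exact congrArg (z :: ·) hy⟩
    · obtain ⟨y, hy⟩ := rotFun_append (e z) u x
      exact ⟨y, by simp only [List.cons_append, ggsFun, if_neg hz]; exact congrArg (z :: ·) hy⟩

lemma ggsB_mem_autT (e : ZMod p → ZMod p) : ggsB e ∈ AutT (ZMod p) :=
  ⟨rfl, fun u x => ggsFun_append e u x⟩

lemma ggsGroup_le_autT (e : ZMod p → ZMod p) : ggsGroup p e ≤ AutT (ZMod p) := by
  rw [ggsGroup]
  refine (Subgroup.closure_le _).mpr ?_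
  intro g hg
  simp only [Set.mem_insert_iff, Set.mem_singleton_iff] at hg
  rcases hg with rfl | rfl
  · exact rotPerm_mem_autT 1
  · exact ggsB_mem_autT e

lemma rotPerm_mul (m m' : ZMod p) : rotPerm m * rotPerm m' = rotPerm (m + m') := by
  refine Equiv.ext fun v => ?_
  cases v with
  | nil => rfl
  | cons x w =>
    show (x + m' + m) :: w = (x + (m + m')) :: w
    congr 1
    ring

lemma rotPerm_zero : rotPerm (0 : ZMod p) = 1 := by
  refine Equiv.ext fun v => ?_
  cases v with
  | nil => rfl
  | cons x w =>
    show (x + 0) :: w = x :: w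
    rw [add_zero]

lemma rotPerm_pow (m : ZMod p) (n : ℕ) : rotPerm m ^ n = rotPerm ((n : ZMod p) * m) := by
  induction n with
  | zero => simp [rotPerm_zero]
  | succ n ih =>
    rw [pow_succ, ih, rotPerm_mul]
    congr 1
    push_cast
    ring

lemma rotPerm_mem [NeZero p] (e : ZMod p → ZMod p) (m : ZMod p) :
    rotPerm m ∈ ggsGroup p e := by
  have h : rotPerm m = rotPerm (1 : ZMod p) ^ m.val := by
    rw [rotPerm_pow, mul_one, ZMod.natCast_val, ZMod.cast_id]
  rw [h]
  exact pow_mem (Subgroup.subset_closure (Set.mem_insert _ _)) _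

lemma ggsB_mem (e : ZMod p → ZMod p) : ggsB e ∈ ggsGroup p e :=
  Subgroup.subset_closure (Set.mem_insert_of_mem _ rfl)

lemma sect_rotPerm_cons (m : ZMod p) (x : ZMod p) : sect (rotPerm m) [x] = 1 := by
  refine Equiv.ext fun v => ?_
  rw [sect_apply (rotPerm_mem_autT m)]
  rfl

lemma ggsB_fix1 (e : ZMod p → ZMod p) (x : ZMod p) : ggsB e [x] = [x] := by
  show ggsFun e [x] = [x]
  by_cases h : x = 0 <;> simp [ggsFun, rotFun, h]

lemma sect_ggsB_cons (e : ZMod p → ZMod p) (x : ZMod p) :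
    sect (ggsB e) [x] = if x = 0 then ggsB e else rotPerm (e x) := by
  refine Equiv.ext fun v => ?_
  by_cases h : x = 0
  · rw [if_pos h, sect_apply (ggsB_mem_autT e)]
    subst h
    show (ggsFun e ((0 : ZMod p) :: v)).drop (ggsFun e [(0 : ZMod p)]).length = ggsFun e v
    simp [ggsFun]
  · rw [if_neg h, sect_apply (ggsB_mem_autT e)]
    show (ggsFun e (x :: v)).drop (ggsFun e [x]).length = rotFun (e x) v
    simp only [ggsFun, if_neg h]
    rfl

lemma sect_rotPerm_mem [NeZero p] (e : ZMod p → ZMod p) (m : ZMod p) (u : List (ZMod p)) :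
    sect (rotPerm m) u ∈ ggsGroup p e := by
  cases u with
  | nil =>
    rw [sect_root (rotPerm_mem_autT m)]
    exact rotPerm_mem e m
  | cons x w =>
    rw [show (x :: w) = [x] ++ w from rfl, sect_append (rotPerm_mem_autT m),
      sect_rotPerm_cons, sect_one]
    exact one_mem _

lemma sect_ggsB_mem [NeZero p] (e : ZMod p → ZMod p) (u : List (ZMod p)) :
    sect (ggsB e) u ∈ ggsGroup p e := by
  induction u with
  | nil =>
    rw [sect_root (ggsB_mem_autT e)]
    exact ggsB_mem e
  | cons x w ih =>
    rw [show (x :: w) = [x] ++ w from rfl, sect_append (ggsB_mem_autT e), sect_ggsB_cons]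
    by_cases h : x = 0
    · rw [if_pos h]; exact ih
    · rw [if_neg h]; exact sect_rotPerm_mem e (e x) w

lemma sect_mem_ggs [NeZero p] {e : ZMod p → ZMod p} {g : Equiv.Perm (List (ZMod p))}
    (hg : g ∈ ggsGroup p e) (u : List (ZMod p)) : sect g u ∈ ggsGroup p e := by
  revert u
  refine Subgroup.closure_induction (p := fun g _ => ∀ u, sect g u ∈ ggsGroup p e)
    ?_ ?_ ?_ ?_ hg
  · intro g hgk
    simp only [Set.mem_insert_iff, Set.mem_singleton_iff] at hgk
    rcases hgk with rfl | rfl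
    · exact sect_rotPerm_mem e 1
    · exact sect_ggsB_mem e
  · intro u
    rw [sect_one]
    exact one_mem _
  · intro f g hf hg ihf ihg u
    rw [sect_mul (ggsGroup_le_autT e hf) (ggsGroup_le_autT e hg)]
    exact mul_mem (ihf _) (ihg _)
  · intro g hg ih u
    rw [sect_inv (ggsGroup_le_autT e hg)]
    exact inv_mem (ih _)

/-- The image of `st_G(L_1)` under `ψ_x`, as a subgroup. -/
def sectStab (p : ℕ) (e : ZMod p → ZMod p) (x : ZMod p) :
    Subgroup (Equiv.Perm (List (ZMod p))) where
  carrier := (fun g => sect g [x]) '' (stL (ggsGroup p e) 1 : Set (Equiv.Perm (List (ZMod p))))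
  one_mem' := ⟨1, one_mem _, sect_one _⟩
  mul_mem' := by
    rintro _ _ ⟨f, hf, rfl⟩ ⟨g, hg, rfl⟩
    refine ⟨f * g, mul_mem hf hg, ?_⟩
    show sect (f * g) [x] = sect f [x] * sect g [x]
    rw [sect_mul (ggsGroup_le_autT e hf.1) (ggsGroup_le_autT e hg.1), hg.2 [x] rfl]
  inv_mem' := by
    rintro _ ⟨g, hg, rfl⟩
    refine ⟨g⁻¹, inv_mem hg, ?_⟩
    have h2 : g⁻¹ [x] = [x] := (inv_mem hg : g⁻¹ ∈ stL (ggsGroup p e) 1).2 [x] rfl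
    show sect g⁻¹ [x] = (sect g [x])⁻¹
    rw [sect_inv (ggsGroup_le_autT e hg.1), h2]

lemma conj_mem_stL [NeZero p] (e : ZMod p → ZMod p) (k : ZMod p) :
    rotPerm k * ggsB e * rotPerm (-k) ∈ stL (ggsGroup p e) 1 := by
  refine ⟨mul_mem (mul_mem (rotPerm_mem e k) (ggsB_mem e)) (rotPerm_mem e (-k)), ?_⟩
  intro u hu
  cases u with
  | nil => simp at hu
  | cons y w =>
    have hw : w = [] := by simpa using hu
    subst hw
    show rotPerm k (ggsB e (rotPerm (-k) [y])) = [y]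
    rw [show rotPerm (-k) [y] = [y + -k] from rfl, ggsB_fix1,
      show rotPerm k [y + -k] = [y + -k + k] from rfl, neg_add_cancel_right]

lemma sect_conj (e : ZMod p → ZMod p) (k y : ZMod p) :
    sect (rotPerm k * ggsB e * rotPerm (-k)) [y] = sect (ggsB e) [y + -k] := by
  have h1 := rotPerm_mem_autT (p := p) k
  have h2 := ggsB_mem_autT e
  have h3 := rotPerm_mem_autT (p := p) (-k)
  rw [sect_mul (mul_mem h1 h2) h3, show rotPerm (-k) [y] = [y + -k] from rfl,
    sect_mul h1 h2, ggsB_fix1, sect_rotPerm_cons, sect_rotPerm_cons, one_mul, mul_one]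

end GGSLemmas

end TreeFract


namespace TreeFract

/-- Every GGS-group over the `p`-adic tree (with nonzero defining
vector `e`) is strongly fractal, and in particular fractal. -/
theorem ggsGroup_stronglyFractal (p : ℕ) [Fact p.Prime] (e : ZMod p → ZMod p)
    (he : ∃ i : ZMod p, i ≠ 0 ∧ e i ≠ 0) :
    StronglyFractal (ggsGroup p e) ∧ Fractal (ggsGroup p e) := by
  haveI : NeZero p := ⟨(Fact.out : p.Prime).ne_zero⟩
  have hSF : StronglyFractal (ggsGroup p e) := by
    intro x
    have h1 : sectStab p e x ≤ ggsGroup p e := by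
      rintro _ ⟨g, hg, rfl⟩
      exact sect_mem_ggs hg.1 [x]
    have h2 : ggsGroup p e ≤ sectStab p e x := by
      rw [ggsGroup]
      refine (Subgroup.closure_le _).mpr ?_
      intro g hgk
      simp only [Set.mem_insert_iff, Set.mem_singleton_iff] at hgk
      rcases hgk with rfl | rfl
      · obtain ⟨i, hi0, hei⟩ := he
        have hmem : rotPerm (e i) ∈ sectStab p e x := by
          refine ⟨rotPerm (x - i) * ggsB e * rotPerm (-(x - i)), conj_mem_stL e (x - i), ?_⟩
          show sect (rotPerm (x - i) * ggsB e * rotPerm (-(x - i))) [x] = rotPerm (e i)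
          rw [sect_conj, show x + -(x - i) = i by ring, sect_ggsB_cons, if_neg hi0]
        have hpow := pow_mem hmem ((e i)⁻¹.val)
        rwa [rotPerm_pow, ZMod.natCast_val, ZMod.cast_id, inv_mul_cancel₀ hei] at hpow
      · refine ⟨rotPerm x * ggsB e * rotPerm (-x), conj_mem_stL e x, ?_⟩
        show sect (rotPerm x * ggsB e * rotPerm (-x)) [x] = ggsB e
        rw [sect_conj, show x + -x = (0 : ZMod p) by ring, sect_ggsB_cons, if_pos rfl]
    have h3 : sectStab p e x = ggsGroup p e := le_antisymm h1 h2
    show ((sectStab p e x : Set (Equiv.Perm (List (ZMod p))))) = _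
    rw [h3]
  have hF : Fractal (ggsGroup p e) := by
    intro u
    induction u with
    | nil =>
      ext h
      constructor
      · rintro ⟨g, hg, rfl⟩
        show sect g [] ∈ (ggsGroup p e : Set (Equiv.Perm (List (ZMod p))))
        rw [sect_root (ggsGroup_le_autT e hg.1)]
        exact hg.1
      · intro hh
        exact ⟨h, ⟨hh, (ggsGroup_le_autT e hh).1⟩, sect_root (ggsGroup_le_autT e hh)⟩
    | cons x w ih =>
      ext h
      constructor
      · rintro ⟨g, hg, rfl⟩
        exact sect_mem_ggs hg.1 _
      · intro hh
        rw [← ih] at hh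
        obtain ⟨f, hf, rfl⟩ := hh
        have hf1 : f ∈ (ggsGroup p e : Set (Equiv.Perm (List (ZMod p)))) := hf.1
        rw [← hSF x] at hf1
        obtain ⟨g, hg, rfl⟩ := hf1
        have hgA : g ∈ AutT (ZMod p) := ggsGroup_le_autT e hg.1
        have hx1 : g [x] = [x] := hg.2 [x] rfl
        refine ⟨g, ⟨hg.1, ?_⟩, ?_⟩
        · show g (x :: w) = x :: w
          have hfw : sect g [x] w = w := hf.2
          rw [show x :: w = [x] ++ w from rfl, sect_spec hgA, hx1, hfw]
        · show sect g (x :: w) = sect (sect g [x]) w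
          exact sect_append hgA [x] w
  exact ⟨hSF, hF⟩

end TreeFract
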